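/- Let k ≥ 2 and let u : ℕ → A be a k-automatic infinite word over a finite alphabet A (i.e., the k-kernel of u is finite). If u contains only finitely many distinct palindromic factors, then the PPL-difference sequence d_u is k-automatic (its k-kernel is finite). -/

import Mathlib

/-- Prefix `u[0..n-1]` of the infinite word `u`. -/
def wordPrefix {A : Type*} (u : ℕ → A) (n : ℕ) : List A :=
  List.ofFn (fun i : Fin n => u i)

/-- Factor `u[i..i+ℓ-1]` of the infinite word `u`. -/
def wordFactor {A : Type*} (u : ℕ → A) (i ℓ : ℕ) : List A :=
  List.ofFn (fun j : Fin ℓ => u (i + j))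

/-- A palindrome is a word equal to its reversal. -/
def IsPalindrome {A : Type*} (w : List A) : Prop := w.reverse = w

/-- `w` is a concatenation of `k` nonempty palindromes. -/
def IsPalConcat {A : Type*} (w : List A) (k : ℕ) : Prop :=
  ∃ ps : List (List A), ps.length = k ∧ (∀ p ∈ ps, p ≠ [] ∧ IsPalindrome p) ∧ ps.flatten = w

/-- Prefix palindromic length: the least number of nonempty palindromes whose
concatenation is the prefix of length `n` of `u` (`PPL u 0 = 0`). -/
noncomputable def PPL {A : Type*} (u : ℕ → A) (n : ℕ) : ℕ :=
  sInf {k | IsPalConcat (wordPrefix u n) k}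

/-- The PPL-difference sequence `d_u(n) = PPL_u(n+1) - PPL_u(n)`. -/
noncomputable def PPLdiff {A : Type*} (u : ℕ → A) (n : ℕ) : ℤ :=
  (PPL u (n + 1) : ℤ) - (PPL u n : ℤ)

/-- The `k`-kernel of a sequence `x`: all subsequences `(x (k^e * n + b))_n` with `b < k^e`. -/
def kernelSeq {S : Type*} (k : ℕ) (x : ℕ → S) : Set (ℕ → S) :=
  {y | ∃ e b : ℕ, b < k ^ e ∧ y = fun n => x (k ^ e * n + b)}

section KernelLemmas

variable {S T : Type*} {k : ℕ}

lemma self_mem_kernel (x : ℕ → S) : x ∈ kernelSeq k x :=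
  ⟨0, 0, by norm_num, by funext n; simp⟩

lemma kernel_closed {x : ℕ → S} {y : ℕ → S} (hy : y ∈ kernelSeq k x)
    {e b : ℕ} (hb : b < k ^ e) : (fun n => y (k ^ e * n + b)) ∈ kernelSeq k x := by
  obtain ⟨e', b', hb', rfl⟩ := hy
  refine ⟨e + e', k ^ e' * b + b', ?_, ?_⟩
  · calc k ^ e' * b + b' < k ^ e' * b + k ^ e' := by omega
    _ = k ^ e' * (b + 1) := by ring
    _ ≤ k ^ e' * k ^ e := Nat.mul_le_mul_left _ (by omega)
    _ = k ^ (e + e') := by rw [← pow_add]; ring_nf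
  · funext n
    rw [pow_add]
    ring_nf

lemma kernel_comp {x : ℕ → S} (f : S → T) (hx : (kernelSeq k x).Finite) :
    (kernelSeq k (fun n => f (x n))).Finite := by
  apply Set.Finite.subset (hx.image (fun y => fun n => f (y n)))
  rintro y ⟨e, b, hb, rfl⟩
  exact ⟨fun n => x (k ^ e * n + b), ⟨e, b, hb, rfl⟩, rfl⟩

lemma kernel_shift (hk : 2 ≤ k) (c : ℕ) {x : ℕ → S} (hx : (kernelSeq k x).Finite) :
    (kernelSeq k (fun n => x (n + c))).Finite := by
  have hfin : (Set.Iic c).Finite := Set.finite_Iic c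
  apply Set.Finite.subset ((hx.prod hfin).image (fun p => fun n => p.1 (n + p.2)))
  rintro y ⟨e, b, hb, rfl⟩
  have hke : 0 < k ^ e := Nat.pow_pos (by omega)
  set q := (b + c) / k ^ e with hq
  set r := (b + c) % k ^ e with hr
  have hdm : k ^ e * q + r = b + c := Nat.div_add_mod _ _
  have hrlt : r < k ^ e := Nat.mod_lt _ hke
  have hqc : q ≤ c := by
    by_contra h
    push_neg at h
    have : k ^ e * (c + 1) ≤ k ^ e * q := Nat.mul_le_mul_left _ (by omega)
    nlinarith
  refine ⟨(fun n => x (k ^ e * n + r), q), ⟨⟨e, r, hrlt, rfl⟩, hqc⟩, ?_⟩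
  funext n
  simp only
  congr 1
  have : k ^ e * (n + q) + r = k ^ e * n + b + c := by
    rw [Nat.mul_add]
    omega
  omega


end KernelLemmas

def runSeq {A Q : Type*} (δ : Q → A → Q) (q0 : Q) (u : ℕ → A) : ℕ → Q
  | 0 => q0
  | n + 1 => δ (runSeq δ q0 u n) (u n)

namespace RunAux

variable {A : Type*} (k : ℕ) (u : ℕ → A)

def subK (e b : ℕ) (y : ↥(kernelSeq k u)) : ↥(kernelSeq k u) :=
  if h : b < k ^ e then ⟨fun n => y.1 (k ^ e * n + b), kernel_closed y.2 h⟩ else y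

def XB (n : ℕ) : ↥(kernelSeq k u) → A := fun y => y.1 n

def SigB (e b : ℕ) (f : ↥(kernelSeq k u) → A) : ↥(kernelSeq k u) → A :=
  fun y => f (subK k u e b y)

lemma X_spec {e b : ℕ} (hb : b < k ^ e) (n : ℕ) :
    XB k u (k ^ e * n + b) = SigB k u e b (XB k u n) := by
  funext y
  simp [XB, SigB, subK, hb]

variable {M : Type*} [Monoid M]

def PP (h : (↥(kernelSeq k u) → A) → M) : ℕ → M
  | 0 => 1
  | n + 1 => PP h n * h (XB k u n)

lemma PP_add (h : (↥(kernelSeq k u) → A) → M) (a t : ℕ) :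
    PP k u h (a + t) = PP k u h a * (List.ofFn (fun i : Fin t => h (XB k u (a + i)))).prod := by
  induction t with
  | zero => simp [PP]
  | succ t ih =>
      rw [show a + (t+1) = (a+t) + 1 by ring, PP, ih, List.ofFn_succ']
      simp only [List.concat_eq_append, List.prod_append, List.prod_cons, List.prod_nil,
        mul_one, Fin.coe_castSucc, Fin.val_last, mul_assoc]

def hstep (h : (↥(kernelSeq k u) → A) → M) : (↥(kernelSeq k u) → A) → M :=
  fun β => (List.ofFn (fun i : Fin k => h (SigB k u 1 i β))).prod

def gstep (h : (↥(kernelSeq k u) → A) → M) (r : ℕ) : (↥(kernelSeq k u) → A) → M :=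
  fun β => (List.ofFn (fun i : Fin r => h (SigB k u 1 i β))).prod

lemma PP_mulk (h : (↥(kernelSeq k u) → A) → M) (m : ℕ) :
    PP k u h (k * m) = PP k u (hstep k u h) m := by
  induction m with
  | zero => simp [PP]
  | succ m ih =>
      rw [Nat.mul_succ, PP_add, ih, PP]
      have harg : (fun i : Fin k => h (XB k u (k * m + (i : ℕ))))
          = fun i : Fin k => h (SigB k u 1 (i : ℕ) (XB k u m)) := by
        funext i
        rw [show k * m + (i : ℕ) = k ^ 1 * m + i by rw [pow_one],
          X_spec k u (by simpa using i.isLt)]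
      rw [harg]
      rfl

lemma PP_kr (h : (↥(kernelSeq k u) → A) → M) {r : ℕ} (hr : r < k) (m : ℕ) :
    PP k u h (k * m + r) = PP k u (hstep k u h) m * gstep k u h r (XB k u m) := by
  rw [PP_add, PP_mulk]
  have harg : (fun i : Fin r => h (XB k u (k * m + (i : ℕ))))
      = fun i : Fin r => h (SigB k u 1 (i : ℕ) (XB k u m)) := by
    funext i
    rw [show k * m + (i : ℕ) = k ^ 1 * m + i by rw [pow_one],
      X_spec k u (by simpa using lt_trans i.isLt hr)]
  rw [harg]
  rfl

lemma PP_form (hk : 2 ≤ k) (e : ℕ) :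
    ∀ b < k ^ e, ∀ h : (↥(kernelSeq k u) → A) → M,
      ∃ h' g : (↥(kernelSeq k u) → A) → M, ∀ n, PP k u h (k ^ e * n + b) = PP k u h' n * g (XB k u n) := by
  induction e with
  | zero =>
      intro b hb h
      have hb0 : b = 0 := by simpa using hb
      subst hb0
      exact ⟨h, fun _ => 1, fun n => by simp [PP_add]⟩
  | succ e ih =>
      intro b hb h
      have hkpos : 0 < k := by omega
      have hb' : b / k < k ^ e := by
        rw [Nat.div_lt_iff_lt_mul hkpos]
        rw [pow_succ] at hb
        exact hb
      obtain ⟨h'', g'', hfor⟩ := ih (b / k) hb' (hstep k u h)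
      refine ⟨h'', fun β => g'' β * gstep k u h (b % k) (SigB k u e (b / k) β), fun n => ?_⟩
      have key : k ^ (e+1) * n + b = k * (k ^ e * n + b / k) + b % k := by
        rw [pow_succ]
        have := Nat.div_add_mod b k
        ring_nf
        omega
      rw [key, PP_kr k u h (Nat.mod_lt _ hkpos), hfor,
        X_spec k u hb', mul_assoc]

lemma PP_kernel_finite [Finite A] [Finite M] (hk : 2 ≤ k) (hu : (kernelSeq k u).Finite)
    (h0 : (↥(kernelSeq k u) → A) → M) : (kernelSeq k (PP k u h0)).Finite := by
  haveI := hu.to_subtype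
  apply Set.Finite.subset
    (Set.finite_range (fun p : ((↥(kernelSeq k u) → A) → M) × ((↥(kernelSeq k u) → A) → M) =>
      fun n => PP k u p.1 n * p.2 (XB k u n)))
  rintro y ⟨e, b, hb, rfl⟩
  obtain ⟨h', g, hfor⟩ := PP_form k u hk e b hb h0
  exact ⟨(h', g), funext fun n => (hfor n).symm⟩

end RunAux

theorem run_kernel_finite {A Q : Type*} [Finite A] [Finite Q] {k : ℕ} {u : ℕ → A}
    (hk : 2 ≤ k) (hu : (kernelSeq k u).Finite) (δ : Q → A → Q) (q0 : Q) :
    (kernelSeq k (runSeq δ q0 u)).Finite := by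
  classical
  haveI : Finite (Function.End Q) := inferInstanceAs (Finite (Q → Q))
  haveI : Finite (Function.End Q)ᵐᵒᵖ := Finite.of_equiv _ MulOpposite.opEquiv
  set uK : ↥(kernelSeq k u) := ⟨u, self_mem_kernel u⟩ with huK
  set h0 : (↥(kernelSeq k u) → A) → (Function.End Q)ᵐᵒᵖ :=
    fun β => MulOpposite.op (fun q => δ q (β uK)) with hh0
  have hrun : ∀ n, runSeq δ q0 u n = (RunAux.PP k u h0 n).unop q0 := by
    intro n
    induction n with
    | zero => rfl
    | succ n ih =>
        rw [runSeq, RunAux.PP, MulOpposite.unop_mul, ih]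
        rfl
  have : runSeq δ q0 u = fun n => (fun m : (Function.End Q)ᵐᵒᵖ => m.unop q0) (RunAux.PP k u h0 n) :=
    funext hrun
  rw [this]
  exact kernel_comp (fun m : (Function.End Q)ᵐᵒᵖ => m.unop q0) (RunAux.PP_kernel_finite k u hk hu h0)

section PPLLemmas

variable {A : Type*} {u : ℕ → A}

lemma length_wordPrefix (u : ℕ → A) (n : ℕ) : (wordPrefix u n).length = n := by
  simp [wordPrefix]

lemma length_wordFactor (u : ℕ → A) (i ℓ : ℕ) : (wordFactor u i ℓ).length = ℓ := by
  simp [wordFactor]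

lemma wordFactor_succ (u : ℕ → A) (i ℓ : ℕ) :
    wordFactor u i (ℓ + 1) = (wordFactor u i ℓ).concat (u (i + ℓ)) := by
  unfold wordFactor
  rw [List.ofFn_succ']
  rfl

lemma wordPrefix_add (u : ℕ → A) (n j : ℕ) :
    wordPrefix u (n + j) = wordPrefix u n ++ wordFactor u n j := by
  induction j with
  | zero => simp [wordFactor, wordPrefix]
  | succ j ih =>
      have : wordPrefix u (n + (j+1)) = (wordPrefix u (n+j)).concat (u (n+j)) := by
        unfold wordPrefix
        rw [show n + (j + 1) = (n + j) + 1 from rfl, List.ofFn_succ']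
        rfl
      rw [this, ih, wordFactor_succ]
      simp

lemma palconcat_self (w : List A) : IsPalConcat w w.length := by
  refine ⟨w.map (fun a => [a]), by simp, ?_, ?_⟩
  · intro p hp
    simp only [List.mem_map] at hp
    obtain ⟨a, -, rfl⟩ := hp
    exact ⟨by simp, by simp [IsPalindrome]⟩
  · induction w with
    | nil => rfl
    | cons a w ih => simp only [List.map_cons, List.flatten_cons, ih]; rfl

lemma palconcat_append {w v : List A} {a b : ℕ}
    (hw : IsPalConcat w a) (hv : IsPalConcat v b) : IsPalConcat (w ++ v) (a + b) := by
  obtain ⟨ps, hl, hp, hf⟩ := hw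
  obtain ⟨qs, hl', hp', hf'⟩ := hv
  exact ⟨ps ++ qs, by simp [hl, hl'], fun p hp'' => by
    rcases List.mem_append.mp hp'' with h | h
    exacts [hp p h, hp' p h], by simp [hf, hf']⟩

lemma ppl_le {n m : ℕ} (h : IsPalConcat (wordPrefix u n) m) : PPL u n ≤ m :=
  Nat.sInf_le h

lemma ppl_spec (u : ℕ → A) (n : ℕ) : IsPalConcat (wordPrefix u n) (PPL u n) := by
  have : (wordPrefix u n).length = n := length_wordPrefix u n
  have hne : {k | IsPalConcat (wordPrefix u n) k}.Nonempty :=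
    ⟨n, by have h2 := palconcat_self (wordPrefix u n); rwa [this] at h2⟩
  exact Nat.sInf_mem hne

lemma ppl_add_le (u : ℕ → A) (n j : ℕ) : PPL u (n + j) ≤ PPL u n + j := by
  apply ppl_le
  rw [wordPrefix_add]
  refine palconcat_append (ppl_spec u n) ?_
  have h2 := palconcat_self (wordFactor u n j)
  rwa [length_wordFactor] at h2

lemma ppl_suffix_le {m' ℓ : ℕ} (h1 : 1 ≤ ℓ) (hp : IsPalindrome (wordFactor u m' ℓ)) :
    PPL u (m' + ℓ) ≤ PPL u m' + 1 := by
  apply ppl_le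
  rw [wordPrefix_add]
  refine palconcat_append (ppl_spec u m') ⟨[wordFactor u m' ℓ], rfl, ?_, by simp⟩
  rintro p hp'
  simp only [List.mem_singleton] at hp'
  subst hp'
  refine ⟨?_, hp⟩
  intro h
  have := congrArg List.length h
  rw [length_wordFactor] at this
  simp at this
  omega

lemma ppl_step {n : ℕ} (hn : 1 ≤ n) :
    ∃ m' ℓ, m' + ℓ = n ∧ 1 ≤ ℓ ∧ IsPalindrome (wordFactor u m' ℓ) ∧
      wordFactor u m' ℓ ≠ [] ∧ PPL u n = PPL u m' + 1 := by
  obtain ⟨ps, hl, hp, hf⟩ := ppl_spec u n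
  rcases List.eq_nil_or_concat ps with rfl | ⟨qs, p, rfl⟩
  · exfalso
    have := congrArg List.length hf
    rw [length_wordPrefix] at this
    simp at this
    omega
  · have hflat : qs.flatten ++ p = wordPrefix u n := by
      rw [← hf, List.concat_eq_append, List.flatten_append]
      simp
    set m' := qs.flatten.length with hm'
    set ℓ := p.length with hℓ
    have hsum : m' + ℓ = n := by
      have := congrArg List.length hflat
      rw [List.length_append, length_wordPrefix] at this
      omega
    have hsplit := wordPrefix_add u m' ℓ
    rw [hsum] at hsplit
    have hinj := List.append_inj (hflat.trans hsplit) (by rw [length_wordPrefix])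
    have hpal : p = wordFactor u m' ℓ := hinj.2
    have hpmem := hp p (by simp)
    have hℓ1 : 1 ≤ ℓ := by
      rcases Nat.eq_zero_or_pos ℓ with h | h
      · exact absurd (List.length_eq_zero_iff.mp (hℓ ▸ h.symm).symm) hpmem.1
      · exact h
    have hqs : IsPalConcat (wordPrefix u m') qs.length :=
      ⟨qs, rfl, fun q hq => hp q (by simp [hq]), hinj.1⟩
    have hle1 : PPL u m' ≤ qs.length := ppl_le hqs
    have hps : (qs.concat p).length = qs.length + 1 := by simp
    refine ⟨m', ℓ, hsum, hℓ1, hpal ▸ hpmem.2, hpal ▸ hpmem.1, le_antisymm ?_ ?_⟩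
    · rw [← hsum]
      exact ppl_suffix_le hℓ1 (hpal ▸ hpmem.2)
    · calc PPL u m' + 1 ≤ qs.length + 1 := by omega
      _ = PPL u n := by rw [← hl, hps]

end PPLLemmas

section Bounds

variable {A : Type*} {u : ℕ → A} {L : ℕ}

/-- `hlen`: every nonempty palindromic factor has length at most `L`. -/
def PalBound (u : ℕ → A) (L : ℕ) : Prop :=
  ∀ m' ℓ : ℕ, 1 ≤ ℓ → IsPalindrome (wordFactor u m' ℓ) → ℓ ≤ L

lemma ppl_pred (hlen : PalBound u L) {n : ℕ} (hn : 1 ≤ n) :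
    PPL u (n - 1) + 2 ≤ PPL u n + L := by
  obtain ⟨m', ℓ, hsum, hℓ1, hpal, -, heq⟩ := ppl_step (u := u) hn
  have hL : ℓ ≤ L := hlen m' ℓ hℓ1 hpal
  have h1 : PPL u (n - 1) ≤ PPL u m' + (ℓ - 1) := by
    have := ppl_add_le u m' (ℓ - 1)
    have hrw : m' + (ℓ - 1) = n - 1 := by omega
    rwa [hrw] at this
  omega

lemma ppl_sub_le (hlen : PalBound u L) {m i : ℕ} (hi : i ≤ m) :
    PPL u (m - i) ≤ PPL u m + i * L := by
  induction i with
  | zero => simp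
  | succ i ih =>
      have h1 : 1 ≤ m - i := by omega
      have h2 := ppl_pred hlen h1
      have h3 := ih (by omega)
      have hrw : m - i - 1 = m - (i + 1) := by omega
      rw [hrw] at h2
      have : (i + 1) * L = i * L + L := by ring
      omega

lemma ppl_le_sub_add {m i : ℕ} (hi : i ≤ m) : PPL u m ≤ PPL u (m - i) + i := by
  have := ppl_add_le u (m - i) i
  rwa [Nat.sub_add_cancel hi] at this

lemma profile_lower {m i : ℕ} (hi : i ≤ m) (hiL : i ≤ L) :
    -(L : ℤ) ≤ (PPL u (m - i) : ℤ) - (PPL u m : ℤ) := by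
  have := ppl_le_sub_add (u := u) hi
  have : (PPL u m : ℤ) ≤ (PPL u (m - i) : ℤ) + i := by exact_mod_cast this
  have hiL' : (i : ℤ) ≤ L := by exact_mod_cast hiL
  linarith

lemma profile_upper (hlen : PalBound u L) {m i : ℕ} (hi : i ≤ m) (hiL : i ≤ L) :
    (PPL u (m - i) : ℤ) - (PPL u m : ℤ) ≤ (L : ℤ) * L := by
  have h := ppl_sub_le hlen hi
  have h' : (PPL u (m - i) : ℤ) ≤ (PPL u m : ℤ) + i * L := by exact_mod_cast h
  have : (i : ℤ) * L ≤ (L : ℤ) * L := by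
    have hiL' : (i : ℤ) ≤ L := by exact_mod_cast hiL
    have hL0 : (0 : ℤ) ≤ L := by positivity
    nlinarith
  linarith

end Bounds

section Automaton

variable {A : Type*}

def QState (A : Type*) (L : ℕ) : Type _ :=
  Fin (L + 1) × (Fin L → A) × (Fin L → ↥(Set.Icc (-(L : ℤ)) ((L : ℤ) * (L : ℤ))))

instance QState.finite [Finite A] {L : ℕ} : Finite (QState A L) := by
  haveI := (Set.finite_Icc (-(L : ℤ)) ((L : ℤ) * (L : ℤ))).to_subtype
  unfold QState
  infer_instance

def clamp (L : ℕ) (z : ℤ) : ↥(Set.Icc (-(L : ℤ)) ((L : ℤ) * (L : ℤ))) :=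
  ⟨max (-(L : ℤ)) (min z ((L : ℤ) * (L : ℤ))), by
    have h0 : (0 : ℤ) ≤ (L : ℤ) := Int.natCast_nonneg L
    constructor
    · exact le_max_left _ _
    · exact max_le (by nlinarith) (min_le_right _ _)⟩

lemma clamp_eq {L : ℕ} {z : ℤ} (h1 : -(L : ℤ) ≤ z) (h2 : z ≤ (L : ℤ) * (L : ℤ)) :
    (clamp L z : ℤ) = z := by
  show max (-(L : ℤ)) (min z ((L : ℤ) * (L : ℤ))) = z
  rw [min_eq_left h2, max_eq_right h1]

def newWin (L : ℕ) (q : QState A L) (a : A) : ℕ → A :=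
  fun i => if i = 0 then a else if h : i - 1 < L then q.2.1 ⟨i - 1, h⟩ else a

def candW (L : ℕ) (q : QState A L) (a : A) (ℓ : ℕ) : List A :=
  List.ofFn (fun i : Fin ℓ => newWin L q a i)

def relF (L : ℕ) (q : QState A L) : ℕ → ℤ :=
  fun ℓ => if h : 2 ≤ ℓ ∧ ℓ - 2 < L then ((q.2.2 ⟨ℓ - 2, h.2⟩ : ℤ)) else 0

def cNF (L : ℕ) (q : QState A L) : ℕ := min (q.1.1 + 1) L

open Classical in
noncomputable def VF (L : ℕ) (q : QState A L) (a : A) : Finset ℕ :=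
  (Finset.Icc 1 (cNF L q)).filter (fun ℓ => IsPalindrome (candW L q a ℓ))

lemma VF_nonempty {L : ℕ} (hL : 1 ≤ L) (q : QState A L) (a : A) : (VF L q a).Nonempty := by
  classical
  refine ⟨1, ?_⟩
  rw [VF]
  simp only [Finset.mem_filter, Finset.mem_Icc]
  refine ⟨⟨le_refl 1, ?_⟩, ?_⟩
  · simp [cNF]; omega
  · show IsPalindrome (candW L q a 1)
    have : candW L q a 1 = [a] := by
      simp [candW, List.ofFn_succ, newWin]
    rw [this]
    rfl

noncomputable def dF (L : ℕ) (hL : 1 ≤ L) (q : QState A L) (a : A) : ℤ :=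
  ((VF L q a).image (relF L q)).min' ((VF_nonempty hL q a).image _) + 1

noncomputable def delta (L : ℕ) (hL : 1 ≤ L) (q : QState A L) (a : A) : QState A L :=
  (⟨cNF L q, Nat.lt_succ_of_le (min_le_right _ _)⟩,
   fun i => newWin L q a i,
   fun i => if (i : ℕ) + 1 ≤ cNF L q then
       (if (i : ℕ) = 0 then clamp L (-(dF L hL q a))
        else clamp L ((q.2.2 ⟨(i : ℕ) - 1, lt_of_le_of_lt (Nat.sub_le _ _) i.isLt⟩ : ℤ)
          - dF L hL q a))
     else clamp L 0)

noncomputable def ideal (u : ℕ → A) (L : ℕ) (m : ℕ) : QState A L :=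
  (⟨min m L, Nat.lt_succ_of_le (min_le_right _ _)⟩,
   fun j => u (m - 1 - (j : ℕ)),
   fun j => if (j : ℕ) + 1 ≤ m then
       clamp L ((PPL u (m - ((j : ℕ) + 1)) : ℤ) - (PPL u m : ℤ))
     else clamp L 0)

end Automaton

section Correctness

variable {A : Type*} {u : ℕ → A} {L : ℕ}

lemma isPal_reverse {w : List A} : IsPalindrome w.reverse ↔ IsPalindrome w := by
  unfold IsPalindrome
  rw [List.reverse_reverse]
  exact eq_comm

lemma cN_ideal (m : ℕ) : cNF L (ideal u L m) = min (m + 1) L := by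
  simp only [cNF, ideal]
  omega

lemma newWin_ideal (m : ℕ) {i : ℕ} (hiL : i < L) :
    newWin L (ideal u L m) (u m) i = u (m - i) := by
  unfold newWin
  rcases Nat.eq_zero_or_pos i with rfl | hi
  · simp
  · rw [if_neg (by omega), dif_pos (show i - 1 < L by omega)]
    simp only [ideal]
    congr 1
    omega

lemma candW_rev (m : ℕ) {ℓ : ℕ} (hℓm : ℓ ≤ m + 1) (hℓL : ℓ ≤ L) :
    (candW L (ideal u L m) (u m) ℓ).reverse = wordFactor u (m + 1 - ℓ) ℓ := by
  have hlen : (candW L (ideal u L m) (u m) ℓ).length = ℓ := by simp [candW]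
  apply List.ext_getElem
  · simp [candW, wordFactor]
  · intro i h1 h2
    have hi : i < ℓ := by simpa [wordFactor] using h2
    simp only [List.getElem_reverse, candW, wordFactor, List.getElem_ofFn, List.length_ofFn]
    rw [newWin_ideal m (show ℓ - 1 - i < L by omega)]
    congr 1
    omega

lemma mem_VF_iff (m : ℕ) {ℓ : ℕ} :
    ℓ ∈ VF L (ideal u L m) (u m) ↔
      1 ≤ ℓ ∧ ℓ ≤ m + 1 ∧ ℓ ≤ L ∧ IsPalindrome (wordFactor u (m + 1 - ℓ) ℓ) := by
  classical
  simp only [VF, Finset.mem_filter, Finset.mem_Icc, cN_ideal]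
  constructor
  · rintro ⟨⟨h1, h2⟩, h3⟩
    have hm : ℓ ≤ m + 1 := le_trans h2 (min_le_left _ _)
    have hLL : ℓ ≤ L := le_trans h2 (min_le_right _ _)
    refine ⟨h1, hm, hLL, ?_⟩
    rw [← candW_rev m hm hLL]
    exact isPal_reverse.mpr h3
  · rintro ⟨h1, h2, h3, h4⟩
    refine ⟨⟨h1, le_min h2 h3⟩, ?_⟩
    rw [← candW_rev m h2 h3] at h4
    exact isPal_reverse.mp h4

lemma ideal_profile (m : ℕ) {i : ℕ} (hiL : i < L) (him : i + 1 ≤ m) :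
    (ideal u L m).2.2 ⟨i, hiL⟩ = clamp L ((PPL u (m - (i + 1)) : ℤ) - (PPL u m : ℤ)) := by
  simp only [ideal]
  rw [if_pos him]

lemma ideal_profile_val (hlen : PalBound u L) (m : ℕ) {i : ℕ} (hiL : i < L)
    (him : i + 1 ≤ m) :
    ((ideal u L m).2.2 ⟨i, hiL⟩ : ℤ) = (PPL u (m - (i + 1)) : ℤ) - (PPL u m : ℤ) := by
  rw [ideal_profile m hiL him,
    clamp_eq (profile_lower (by omega) (by omega)) (profile_upper hlen (by omega) (by omega))]

lemma relF_ideal (hlen : PalBound u L) (m : ℕ) {ℓ : ℕ} (h1 : 1 ≤ ℓ) (h2 : ℓ ≤ m + 1)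
    (h3 : ℓ ≤ L) :
    relF L (ideal u L m) ℓ = (PPL u (m + 1 - ℓ) : ℤ) - (PPL u m : ℤ) := by
  rcases eq_or_lt_of_le h1 with h | h
  · unfold relF
    rw [dif_neg (by omega)]
    rw [show m + 1 - ℓ = m by omega]
    ring
  · unfold relF
    rw [dif_pos ⟨by omega, by omega⟩]
    rw [ideal_profile_val hlen m (by omega) (by omega)]
    rw [show m - (ℓ - 2 + 1) = m + 1 - ℓ by omega]

lemma dF_ideal (hL : 1 ≤ L) (hlen : PalBound u L) (m : ℕ) :
    dF L hL (ideal u L m) (u m) = (PPL u (m + 1) : ℤ) - (PPL u m : ℤ) := by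
  unfold dF
  have hmin : ((VF L (ideal u L m) (u m)).image (relF L (ideal u L m))).min'
      ((VF_nonempty hL _ _).image _) = (PPL u (m + 1) : ℤ) - (PPL u m : ℤ) - 1 := by
    apply le_antisymm
    · obtain ⟨m', ℓ0, hsum, hℓ1, hpal, hne, heq⟩ := ppl_step (u := u) (n := m + 1) (by omega)
      have hℓL : ℓ0 ≤ L := hlen m' ℓ0 hℓ1 hpal
      have hℓm : ℓ0 ≤ m + 1 := by omega
      have hmem : ℓ0 ∈ VF L (ideal u L m) (u m) :=
        (mem_VF_iff m).mpr ⟨hℓ1, hℓm, hℓL, by rw [show m + 1 - ℓ0 = m' by omega]; exact hpal⟩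
      have hmle := Finset.min'_le _ _ (Finset.mem_image_of_mem (relF L (ideal u L m)) hmem)
      have hcast : (PPL u (m + 1 - ℓ0) : ℤ) = (PPL u (m + 1) : ℤ) - 1 := by
        rw [show m + 1 - ℓ0 = m' by omega, heq]
        push_cast
        ring
      have hrel := relF_ideal hlen m hℓ1 hℓm hℓL
      rw [hcast] at hrel
      linarith [hmle, hrel.le]
    · apply Finset.le_min'
      intro y hy
      obtain ⟨ℓ, hmem, rfl⟩ := Finset.mem_image.mp hy
      obtain ⟨h1, h2, h3, h4⟩ := (mem_VF_iff m).mp hmem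
      rw [relF_ideal hlen m h1 h2 h3]
      have hs := ppl_suffix_le (u := u) h1 h4
      rw [show m + 1 - ℓ + ℓ = m + 1 by omega] at hs
      have hs' : (PPL u (m + 1) : ℤ) ≤ (PPL u (m + 1 - ℓ) : ℤ) + 1 := by exact_mod_cast hs
      linarith
  rw [hmin]
  ring

lemma delta_ideal (hL : 1 ≤ L) (hlen : PalBound u L) (m : ℕ) :
    delta L hL (ideal u L m) (u m) = ideal u L (m + 1) := by
  have hd := dF_ideal hL hlen m
  refine Prod.ext ?_ (Prod.ext ?_ ?_)
  · exact Fin.val_injective (cN_ideal m)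
  · funext j
    show newWin L (ideal u L m) (u m) (j : ℕ) = u ((m + 1) - 1 - (j : ℕ))
    rw [newWin_ideal m j.isLt]
    exact congrArg u (by omega)
  · funext j
    show (if (j : ℕ) + 1 ≤ cNF L (ideal u L m) then
       (if (j : ℕ) = 0 then clamp L (-(dF L hL (ideal u L m) (u m)))
        else clamp L (((ideal u L m).2.2 ⟨(j : ℕ) - 1,
            lt_of_le_of_lt (Nat.sub_le _ _) j.isLt⟩ : ℤ) - dF L hL (ideal u L m) (u m)))
     else clamp L 0) =
      (if (j : ℕ) + 1 ≤ m + 1 then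
       clamp L ((PPL u ((m + 1) - ((j : ℕ) + 1)) : ℤ) - (PPL u (m + 1) : ℤ))
     else clamp L 0)
    rw [cN_ideal m, hd]
    have hjL : (j : ℕ) < L := j.isLt
    by_cases hj : (j : ℕ) + 1 ≤ min (m + 1) L
    · have hjm : (j : ℕ) + 1 ≤ m + 1 := le_trans hj (min_le_left _ _)
      rw [if_pos hj, if_pos hjm]
      by_cases h0 : (j : ℕ) = 0
      · rw [if_pos h0, h0]
        congr 1
        rw [show m + 1 - (0 + 1) = m by omega]
        ring
      · rw [if_neg h0]
        rw [ideal_profile_val hlen m (lt_of_le_of_lt (Nat.sub_le _ _) j.isLt) (by omega)]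
        congr 1
        rw [show m - ((j : ℕ) - 1 + 1) = m + 1 - ((j : ℕ) + 1) by omega]
        ring
    · rw [if_neg hj, if_neg (by omega)]

end Correctness

theorem diff_automatic_of_finitely_many_palindromes {A : Type*} [Finite A]
    (u : ℕ → A) (k : ℕ) (hk : 2 ≤ k)
    (hu : (kernelSeq k u).Finite)
    (hpal : {w : List A | w ≠ [] ∧ IsPalindrome w ∧ ∃ i : ℕ, w = wordFactor u i w.length}.Finite) :
    (kernelSeq k (PPLdiff u)).Finite := by
  classical
  have hmem1 : [u 0] ∈ {w : List A | w ≠ [] ∧ IsPalindrome w ∧ ∃ i : ℕ, w = wordFactor u i w.length} := by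
    refine ⟨by simp, by rfl, 0, ?_⟩
    simp [wordFactor, List.ofFn_succ]
  have hPFne : ((hpal.toFinset.image List.length)).Nonempty :=
    ⟨1, Finset.mem_image.mpr ⟨[u 0], hpal.mem_toFinset.mpr hmem1, by simp⟩⟩
  set L := (hpal.toFinset.image List.length).max' hPFne with hLdef
  have hL : 1 ≤ L :=
    Finset.le_max' _ 1 (Finset.mem_image.mpr ⟨[u 0], hpal.mem_toFinset.mpr hmem1, by simp⟩)
  have hlen : PalBound u L := by
    intro m' ℓ h1 hp
    have hmem : wordFactor u m' ℓ ∈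
        {w : List A | w ≠ [] ∧ IsPalindrome w ∧ ∃ i : ℕ, w = wordFactor u i w.length} := by
      refine ⟨?_, hp, m', by rw [length_wordFactor]⟩
      intro h
      have := congrArg List.length h
      rw [length_wordFactor] at this
      simp at this
      omega
    have := Finset.le_max' (hpal.toFinset.image List.length) ℓ
      (Finset.mem_image.mpr ⟨_, hpal.mem_toFinset.mpr hmem, length_wordFactor u m' ℓ⟩)
    exact this
  have hrun : ∀ m, runSeq (delta L hL) (ideal u L 0) u m = ideal u L m := by
    intro m
    induction m with
    | zero => rfl
    | succ m ih => rw [runSeq, ih, delta_ideal hL hlen]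
  have hout : ∀ n, PPLdiff u n =
      (fun q : QState A L => -((q.2.2 ⟨0, by omega⟩ : ℤ)))
        ((fun n => runSeq (delta L hL) (ideal u L 0) u (n + 1)) n) := by
    intro n
    simp only
    rw [hrun]
    rw [ideal_profile_val hlen (n + 1) (by omega) (by omega)]
    unfold PPLdiff
    rw [show n + 1 - (0 + 1) = n by omega]
    ring
  rw [funext hout]
  exact kernel_comp (fun q : QState A L => -((q.2.2 ⟨0, by omega⟩ : ℤ)))
    (kernel_shift hk 1 (run_kernel_finite hk hu (delta L hL) (ideal u L 0)))
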